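/- Failure of ABC posterior concentration when the tolerance shrinks below ε* (Proposition 1): In the two-dimensional Gaussian setup described in the context, suppose v_θ / v_{θ*} = σ(θ) with σ : ℝ → (0,∞) continuous and σ(b̄₀/2)² ≥ 3, and suppose the prior Π has a positive continuous density on [−b̄₀, b̄₀]. Then for δ > 0 small enough, Π_ε{θ : |θ − θ*| ≤ δ | η(y)} = o(Π_ε{θ : |θ − b̄₀/2| ≤ δ | η(y)}) = o(1); that is, the ratio Π_ε{|θ − θ*| ≤ δ | η(y)} / Π_ε{|θ − b̄₀/2| ≤ δ | η(y)} converges to 0 in P₀-probability, and in particular Π_ε{|θ − θ*| ≤ δ | η(y)} converges to 0 in P₀-probability, so the ABC posterior does not concentrate on the pseudo-true value θ* = 0. -/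

import Mathlib

open MeasureTheory Filter Real

open Topology
open scoped ENNReal

noncomputable section

noncomputable def abc_bp (θ : ℝ) : EuclideanSpace ℝ (Fin 2) := WithLp.toLp 2 ![θ, θ]

lemma abc_cont_pair : Continuous abc_bp := by
  have h : Continuous (fun θ : ℝ => (![θ, θ] : Fin 2 → ℝ)) := by
    apply continuous_pi
    intro i
    fin_cases i <;> simpa using continuous_id'
  exact (PiLp.continuous_toLp 2 (fun _ : Fin 2 => ℝ)).comp h

lemma abc_norm_pair_sub (x : EuclideanSpace ℝ (Fin 2)) (θ a : ℝ)
    (h0 : x 0 = θ - a) (h1 : x 1 = θ + a) :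
    ‖x‖ = Real.sqrt (2*θ^2 + 2*a^2) := by
  rw [EuclideanSpace.norm_eq]
  rw [Fin.sum_univ_two, h0, h1]
  congr 1
  simp only [Real.norm_eq_abs, sq_abs]
  ring

lemma abc_wd_le {α : Type*} [MeasurableSpace α] (μ0 : Measure α) (f : α → ℝ≥0∞) (s : Set α)
    (hs : MeasurableSet s) (c : ℝ≥0∞) (h : ∀ x ∈ s, f x ≤ c) :
    μ0.withDensity f s ≤ c * μ0 s := by
  rw [withDensity_apply _ hs]
  calc ∫⁻ x in s, f x ∂μ0 ≤ ∫⁻ _x in s, c ∂μ0 := setLIntegral_mono measurable_const h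
  _ = c * μ0 s := setLIntegral_const s c

lemma abc_wd_ge {α : Type*} [MeasurableSpace α] (μ0 : Measure α) (f : α → ℝ≥0∞)
    (hf : Measurable f) (s : Set α) (hs : MeasurableSet s) (c : ℝ≥0∞)
    (h : ∀ x ∈ s, c ≤ f x) :
    c * μ0 s ≤ μ0.withDensity f s := by
  rw [withDensity_apply _ hs, ← setLIntegral_const s c]
  exact setLIntegral_mono hf h

lemma abc_exp_arg_le (sn s0 R' κ A B₂ γ : ℝ) (hsn : 0 < sn) (hA : 0 < A) (hB : 0 < B₂)
    (hγ : γ ≤ s0^2/(2*A^2) - R'^2/(2*B₂^2)) :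
    -(sn^2*(s0 - κ/sn)^2)/(2*A^2) + (sn^2*(R'+κ/sn)^2)/(2*B₂^2)
      ≤ -γ*sn^2 + (κ*(s0/A^2 + R'/B₂^2))*sn + κ^2/(2*B₂^2) := by
  have h1 : sn^2*(s0-κ/sn)^2 = (sn*s0-κ)^2 := by field_simp
  have h2 : sn^2*(R'+κ/sn)^2 = (sn*R'+κ)^2 := by field_simp
  rw [h1, h2]
  have key : -γ*sn^2 + (κ*(s0/A^2 + R'/B₂^2))*sn + κ^2/(2*B₂^2)
      - (-((sn*s0-κ)^2)/(2*A^2) + (sn*R'+κ)^2/(2*B₂^2))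
      = sn^2 * ((s0^2/(2*A^2) - R'^2/(2*B₂^2)) - γ) + κ^2/(2*A^2) := by
    field_simp
    ring
  nlinarith [mul_nonneg (sq_nonneg sn) (sub_nonneg.mpr hγ), sq_nonneg κ,
    div_nonneg (sq_nonneg κ) (le_of_lt (by positivity : (0:ℝ) < 2*A^2))]

lemma abc_F_meas (n : ℕ) (vθ : ℝ → ℝ) (hvθ_cont : Continuous vθ)
    (y : EuclideanSpace ℝ (Fin 2)) (e : ℝ) :
    Measurable (fun θ : ℝ =>
      (volume.withDensity (fun t : EuclideanSpace ℝ (Fin 2) => ENNReal.ofReal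
        ((2 * π * vθ θ ^ 2 / (n : ℝ))⁻¹ *
          Real.exp (-((n : ℝ) * ‖t - abc_bp θ‖ ^ 2) /
            (2 * vθ θ ^ 2))))
        (Metric.closedBall y e)).toReal) := by
  set dens : ℝ → EuclideanSpace ℝ (Fin 2) → ℝ≥0∞ := fun θ t => ENNReal.ofReal
        ((2 * π * vθ θ ^ 2 / (n : ℝ))⁻¹ *
          Real.exp (-((n : ℝ) * ‖t - abc_bp θ‖ ^ 2) /
            (2 * vθ θ ^ 2))) with hdens
  have hjoint : Measurable (fun p : ℝ × EuclideanSpace ℝ (Fin 2) => dens p.1 p.2) := by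
    apply ENNReal.measurable_ofReal.comp
    apply Measurable.mul
    · exact ((continuous_const.mul ((hvθ_cont.comp continuous_fst).pow 2)).div_const
        _).measurable.inv
    · apply (Measurable.div ?_ ?_).exp
      · exact (continuous_const.mul
          ((continuous_snd.sub (abc_cont_pair.comp continuous_fst)).norm.pow 2)).measurable.neg
      · exact (continuous_const.mul ((hvθ_cont.comp continuous_fst).pow 2)).measurable
  have hind : Measurable (fun p : ℝ × EuclideanSpace ℝ (Fin 2) =>
      (Metric.closedBall y e).indicator (dens p.1) p.2) := by
    have hms : MeasurableSet {p : ℝ × EuclideanSpace ℝ (Fin 2) |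
        p.2 ∈ Metric.closedBall y e} := measurable_snd measurableSet_closedBall
    have hrw : (fun p : ℝ × EuclideanSpace ℝ (Fin 2) =>
        (Metric.closedBall y e).indicator (dens p.1) p.2)
        = Set.indicator {p : ℝ × EuclideanSpace ℝ (Fin 2) | p.2 ∈ Metric.closedBall y e}
          (fun p => dens p.1 p.2) := by
      rfl
    rw [hrw]
    exact hjoint.indicator hms
  have hlin : Measurable (fun θ : ℝ =>
      ∫⁻ t, (Metric.closedBall y e).indicator (dens θ) t ∂volume) := by
    apply Measurable.lintegral_prod_right' (f := fun p : ℝ × EuclideanSpace ℝ (Fin 2) =>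
      (Metric.closedBall y e).indicator (dens p.1) p.2) hind
  have heq : ∀ θ : ℝ, (volume.withDensity (dens θ) (Metric.closedBall y e))
      = ∫⁻ t, (Metric.closedBall y e).indicator (dens θ) t ∂volume := by
    intro θ
    rw [withDensity_apply _ measurableSet_closedBall,
      lintegral_indicator measurableSet_closedBall]
  convert ENNReal.measurable_toReal.comp hlin using 1
  funext θ
  exact congrArg ENNReal.toReal (heq θ)

set_option maxHeartbeats 2000000 in
/-- **Failure of ABC posterior concentration when the tolerance shrinks below ε***
(Proposition 1 of Frazier, Robert & Rousseau). In the two-dimensional Gaussian setup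
with `b(θ) = (θ,θ)ᵀ`, `b₀ = (bbar₀, −bbar₀)ᵀ`, simulated summaries
`N(b(θ), (v_θ²/n) I₂)` and observed summaries `b₀ + Z̃_y/√n` with `Z̃_y` tight, if
`v_θ/v_{θ*} = σ(θ)` with `σ` continuous and `σ(bbar₀/2)² ≥ 3`, and the prior has a
positive continuous density on `[−bbar₀, bbar₀]`, then for `δ > 0` small enough the
ABC posterior mass of `{|θ − θ*| ≤ δ}` is `o` of that of `{|θ − bbar₀/2| ≤ δ}`, and in
particular tends to `0` in `P₀`-probability (θ* = 0). -/
theorem abc_no_concentration_below_epsilon_star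
    {Ω : Type*} [MeasurableSpace Ω]
    (P₀ : Measure Ω) [IsProbabilityMeasure P₀]
    (bbar₀ : ℝ) (hbbar₀ : 0 < bbar₀)
    -- binding function and pseudo-true limit of the observed summaries
    (b : ℝ → EuclideanSpace ℝ (Fin 2)) (hb : ∀ θ, b θ = ![θ, θ])
    (b₀ : EuclideanSpace ℝ (Fin 2)) (hb₀ : b₀ = ![bbar₀, -bbar₀])
    -- simulated-noise scale v_θ and the ratio σ(θ) = v_θ / v_{θ*} (θ* = 0)
    (vθ : ℝ → ℝ) (hvθ_pos : ∀ θ, 0 < vθ θ) (hvθ_cont : Continuous vθ)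
    (σ : ℝ → ℝ) (hσ_def : ∀ θ, σ θ = vθ θ / vθ 0)
    (hσ_cont : Continuous σ) (hσ_half : 3 ≤ σ (bbar₀ / 2) ^ 2)
    -- law of the simulated summary: η(z) ∼ N(b(θ), (v_θ²/n) I₂)
    (μ : ℕ → ℝ → Measure (EuclideanSpace ℝ (Fin 2)))
    (hμ : ∀ (n : ℕ) (θ : ℝ), 0 < n →
      μ n θ = volume.withDensity (fun t => ENNReal.ofReal
        ((2 * π * vθ θ ^ 2 / (n : ℝ))⁻¹ *
          Real.exp (-((n : ℝ) * ‖t - b θ‖ ^ 2) / (2 * vθ θ ^ 2)))))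
    -- observed summary: η(y) = b₀ + Z̃_y/√n with Z̃_y tight under P₀
    (Zy : ℕ → Ω → EuclideanSpace ℝ (Fin 2))
    (hZy_meas : ∀ n, Measurable (Zy n))
    (hZy_tight : ∀ r : ℝ, 0 < r → ∃ Mc : ℝ,
      Filter.limsup (fun n => P₀ {ω | Mc < ‖Zy n ω‖}) atTop < ENNReal.ofReal r)
    -- prior with positive continuous density on [−bbar₀, bbar₀]
    (πd : ℝ → ℝ) (hπd_meas : Measurable πd) (hπd_nonneg : ∀ θ, 0 ≤ πd θ)
    (hπd_cont : ContinuousOn πd (Set.Icc (-bbar₀) bbar₀))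
    (hπd_pos : ∀ θ ∈ Set.Icc (-bbar₀) bbar₀, 0 < πd θ)
    (Pr : Measure ℝ) (hPr : Pr = volume.withDensity (fun θ => ENNReal.ofReal (πd θ)))
    [IsProbabilityMeasure Pr]
    -- tolerance: ε_n > 0 with √n ε_n bounded
    (ε : ℕ → ℝ) (hε_pos : ∀ n, 0 < ε n)
    (hε_bdd : ∃ B : ℝ, ∀ n : ℕ, Real.sqrt n * ε n ≤ B) :
    ∃ δ₀ : ℝ, 0 < δ₀ ∧ ∀ δ : ℝ, 0 < δ → δ ≤ δ₀ →
      -- Π_ε{|θ − θ*| ≤ δ} = o(Π_ε{|θ − bbar₀/2| ≤ δ}) in P₀-probability (θ* = 0)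
      TendstoInMeasure P₀
        (fun n ω =>
          (∫ θ in {θ : ℝ | |θ| ≤ δ},
              (μ n θ {t | ‖t - (b₀ + (Real.sqrt n)⁻¹ • Zy n ω)‖ ≤ ε n}).toReal ∂Pr) /
          (∫ θ in {θ : ℝ | |θ - bbar₀ / 2| ≤ δ},
              (μ n θ {t | ‖t - (b₀ + (Real.sqrt n)⁻¹ • Zy n ω)‖ ≤ ε n}).toReal ∂Pr))
        atTop (fun _ => 0) ∧
      -- and Π_ε{|θ − θ*| ≤ δ} = o(1) in P₀-probability
      TendstoInMeasure P₀
        (fun n ω =>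
          (∫ θ in {θ : ℝ | |θ| ≤ δ},
              (μ n θ {t | ‖t - (b₀ + (Real.sqrt n)⁻¹ • Zy n ω)‖ ≤ ε n}).toReal ∂Pr) /
          (∫ θ, (μ n θ {t | ‖t - (b₀ + (Real.sqrt n)⁻¹ • Zy n ω)‖ ≤ ε n}).toReal ∂Pr))
        atTop (fun _ => 0) := by
  obtain ⟨Bb, hBb⟩ := hε_bdd
  have hBb_pos : 0 < Bb := lt_of_lt_of_le (hε_pos 1) (by simpa using hBb 1)
  have hb' : ∀ θ : ℝ, b θ = abc_bp θ := by
    intro θ; rw [abc_bp, ← hb θ, WithLp.toLp_ofLp]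
  simp only [hb'] at hμ
  -- basic constants
  have hv0 : 0 < vθ 0 := hvθ_pos 0
  have hv1 : 0 < vθ (bbar₀ / 2) := hvθ_pos _
  have hv1sq : 3 * vθ 0 ^ 2 ≤ vθ (bbar₀ / 2) ^ 2 := by
    have h := hσ_half
    rw [hσ_def, div_pow] at h
    have h2 := (le_div_iff₀ (by positivity : (0:ℝ) < vθ 0 ^ 2)).mp h
    linarith
  obtain ⟨δa, hδa_pos, hδa⟩ := Metric.continuous_iff.mp hvθ_cont 0 (vθ 0 / 10) (by positivity)
  obtain ⟨δb, hδb_pos, hδb⟩ :=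
    Metric.continuous_iff.mp hvθ_cont (bbar₀ / 2) (vθ (bbar₀ / 2) / 10) (by positivity)
  refine ⟨min (min (δa/2) (δb/2)) (bbar₀/20), by positivity, ?_⟩
  set δ₀ : ℝ := min (min (δa/2) (δb/2)) (bbar₀/20) with hδ₀def
  intro δ hδ hδle
  have hδ₀_pos : 0 < δ₀ := by positivity
  have hδ20 : δ ≤ bbar₀/20 := le_trans hδle (min_le_right _ _)
  have hδ₀20 : δ₀ ≤ bbar₀/20 := min_le_right _ _
  -- the variance bounds near 0 and near bbar₀/2
  have hnum_v : ∀ θ : ℝ, |θ| ≤ δ → vθ 0 / 2 ≤ vθ θ ∧ vθ θ ≤ 11/10 * vθ 0 := by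
    intro θ hθ
    have hd : dist θ 0 < δa := by
      rw [Real.dist_eq, sub_zero]
      have h1 : δ₀ ≤ δa/2 := le_trans (min_le_left _ _) (min_le_left _ _)
      calc |θ| ≤ δ := hθ
      _ ≤ δa/2 := le_trans hδle h1
      _ < δa := by linarith
    have h2 := hδa θ hd
    rw [Real.dist_eq] at h2
    have h3 := abs_lt.mp h2
    constructor <;> [linarith [h3.1, h3.2]; linarith [h3.1, h3.2]]
  have hden_v : ∀ θ : ℝ, |θ - bbar₀/2| ≤ δ →
      9/10 * vθ (bbar₀/2) ≤ vθ θ ∧ vθ θ ≤ 2 * vθ (bbar₀/2) := by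
    intro θ hθ
    have hd : dist θ (bbar₀/2) < δb := by
      rw [Real.dist_eq]
      have h1 : δ₀ ≤ δb/2 := le_trans (min_le_left _ _) (min_le_right _ _)
      calc |θ - bbar₀/2| ≤ δ := hθ
      _ ≤ δb/2 := le_trans hδle h1
      _ < δb := by linarith
    have h2 := hδb θ hd
    rw [Real.dist_eq] at h2
    have h3 := abs_lt.mp h2
    constructor <;> [linarith [h3.1, h3.2]; linarith [h3.1, h3.2]]
  -- sets
  have hSn_meas : MeasurableSet {θ : ℝ | |θ| ≤ δ} := by
    have : {θ : ℝ | |θ| ≤ δ} = Set.Icc (-δ) δ := by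
      ext x; simp [abs_le]
    rw [this]; exact measurableSet_Icc
  have hSD_eq : {θ : ℝ | |θ - bbar₀/2| ≤ δ} = Set.Icc (bbar₀/2 - δ) (bbar₀/2 + δ) := by
    ext x
    simp only [Set.mem_setOf_eq, Set.mem_Icc, abs_le]
    constructor
    · rintro ⟨h1, h2⟩; constructor <;> linarith
    · rintro ⟨h1, h2⟩; constructor <;> linarith
  have hSD_meas : MeasurableSet {θ : ℝ | |θ - bbar₀/2| ≤ δ} := by
    rw [hSD_eq]; exact measurableSet_Icc
  -- prior mass of the denominator set is positive
  have hSDsub : Set.Icc (bbar₀/2 - δ) (bbar₀/2 + δ) ⊆ Set.Icc (-bbar₀) bbar₀ := by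
    intro x hx
    simp only [Set.mem_Icc] at hx ⊢
    constructor <;> linarith [hx.1, hx.2]
  obtain ⟨θm, hθm_mem, hθm_min⟩ := isCompact_Icc.exists_isMinOn
    (⟨bbar₀/2, by simp only [Set.mem_Icc]; constructor <;> linarith⟩ :
      (Set.Icc (bbar₀/2 - δ) (bbar₀/2 + δ)).Nonempty)
    (hπd_cont.mono hSDsub)
  have hm : 0 < πd θm := hπd_pos θm (hSDsub hθm_mem)
  have hPrSD : ENNReal.ofReal (πd θm * (2*δ)) ≤ Pr {θ : ℝ | |θ - bbar₀/2| ≤ δ} := by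
    rw [hPr, hSD_eq]
    have h := abc_wd_ge volume (fun θ => ENNReal.ofReal (πd θ)) hπd_meas.ennreal_ofReal
      (Set.Icc (bbar₀/2 - δ) (bbar₀/2 + δ)) measurableSet_Icc (ENNReal.ofReal (πd θm))
      (fun x hx => ENNReal.ofReal_le_ofReal (isMinOn_iff.mp hθm_min x hx))
    calc ENNReal.ofReal (πd θm * (2*δ))
        = ENNReal.ofReal (πd θm) * ENNReal.ofReal (2*δ) := ENNReal.ofReal_mul hm.le
    _ = ENNReal.ofReal (πd θm) * volume (Set.Icc (bbar₀/2 - δ) (bbar₀/2 + δ)) := by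
        rw [Real.volume_Icc]; congr 1; ring
    _ ≤ _ := h
  set p : ℝ := (Pr {θ : ℝ | |θ - bbar₀/2| ≤ δ}).toReal with hpdef
  have hp : 0 < p := by
    have h0 : (0:ℝ≥0∞) < Pr {θ : ℝ | |θ - bbar₀/2| ≤ δ} :=
      lt_of_lt_of_le (ENNReal.ofReal_pos.mpr (by positivity)) hPrSD
    exact ENNReal.toReal_pos h0.ne' (measure_ne_top _ _)
  -- geometric constants
  set A : ℝ := 11/10 * vθ 0 with hAdef
  set B₂ : ℝ := 9/10 * vθ (bbar₀/2) with hB₂def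
  have hApos : 0 < A := by positivity
  have hB₂pos : 0 < B₂ := by positivity
  set s0 : ℝ := Real.sqrt (2 * bbar₀^2) with hs0def
  have hs0pos : 0 < s0 := Real.sqrt_pos.mpr (by positivity)
  have hs0sq : s0^2 = 2*bbar₀^2 := Real.sq_sqrt (by positivity)
  set R' : ℝ := Real.sqrt (2*(bbar₀/2 + δ₀)^2 + 2*bbar₀^2) with hR'def
  have hR'pos : 0 < R' := Real.sqrt_pos.mpr (by positivity)
  have hR'sq : R'^2 = 2*(bbar₀/2 + δ₀)^2 + 2*bbar₀^2 := Real.sq_sqrt (by positivity)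
  set γ : ℝ := bbar₀^2/(4 * vθ 0^2) with hγdef
  have hγpos : 0 < γ := by positivity
  have hgap : γ ≤ s0^2/(2*A^2) - R'^2/(2*B₂^2) := by
    have e1 : s0^2/(2*A^2) = (100/121) * (bbar₀^2/ vθ 0^2) := by
      rw [hs0sq, hAdef]; field_simp; ring
    have hnum : R'^2 ≤ 521/200 * bbar₀^2 := by
      rw [hR'sq]
      nlinarith [hδ₀20, hδ₀_pos, hbbar₀]
    have hden : 243/100 * vθ 0^2 ≤ B₂^2 := by
      rw [hB₂def]; nlinarith [hv1sq]
    have e2 : R'^2/(2*B₂^2) ≤ (521/200 * bbar₀^2)/(2*(243/100 * vθ 0^2)) := by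
      apply div_le_div₀ (by positivity) hnum (by positivity) (by linarith)
    have e3 : (521/200 * bbar₀^2)/(2*(243/100 * vθ 0^2)) = (521/972) * (bbar₀^2/vθ 0^2) := by
      field_simp; ring
    have e0 : γ = 1/4 * (bbar₀^2/vθ 0^2) := by rw [hγdef]; field_simp
    have hX : 0 < bbar₀^2/vθ 0^2 := by positivity
    rw [e3] at e2
    rw [e0, e1]
    linarith
  clear_value δ₀ p A B₂ s0 R' γ
  -- helper: ε n ≤ Bb / √n
  have hεle : ∀ n : ℕ, 1 ≤ n → ε n ≤ Bb / Real.sqrt n := by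
    intro n hn
    have hnpos : (0:ℝ) < n := by exact_mod_cast hn
    have hsn : 0 < Real.sqrt n := Real.sqrt_pos.mpr hnpos
    rw [le_div_iff₀ hsn]
    calc ε n * Real.sqrt n = Real.sqrt n * ε n := mul_comm _ _
    _ ≤ Bb := hBb n
  -- deterministic core estimate
  have main : ∀ M : ℝ, 0 < M → ∀ ε' : ℝ, 0 < ε' → ∃ N : ℕ, ∀ n : ℕ, N ≤ n → ∀ ω : Ω,
      ‖Zy n ω‖ ≤ M →
      |(∫ θ in {θ : ℝ | |θ| ≤ δ},
          (μ n θ {t | ‖t - (b₀ + (Real.sqrt n)⁻¹ • Zy n ω)‖ ≤ ε n}).toReal ∂Pr) /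
        (∫ θ in {θ : ℝ | |θ - bbar₀ / 2| ≤ δ},
          (μ n θ {t | ‖t - (b₀ + (Real.sqrt n)⁻¹ • Zy n ω)‖ ≤ ε n}).toReal ∂Pr)| < ε' ∧
      |(∫ θ in {θ : ℝ | |θ| ≤ δ},
          (μ n θ {t | ‖t - (b₀ + (Real.sqrt n)⁻¹ • Zy n ω)‖ ≤ ε n}).toReal ∂Pr) /
        (∫ θ, (μ n θ {t | ‖t - (b₀ + (Real.sqrt n)⁻¹ • Zy n ω)‖ ≤ ε n}).toReal ∂Pr)| < ε' := by
    intro M hM ε' hε'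
    set κ : ℝ := M + Bb with hκdef
    have hκ : 0 < κ := by positivity
    set c : ℝ := κ * (s0/A^2 + R'/B₂^2) with hcdef
    set c₃ : ℝ := κ^2/(2*B₂^2) with hc₃def
    set K : ℝ := (16 * vθ (bbar₀/2)^2 / vθ 0^2) / p * Real.exp c₃ with hKdef
    have hK : 0 < K := by
      rw [hKdef]
      have h1 : 0 < 16 * vθ (bbar₀/2)^2 / vθ 0^2 := by positivity
      exact mul_pos (div_pos h1 hp) (Real.exp_pos _)
    clear_value κ c c₃ K
    have htend : Tendsto (fun n : ℕ => K * Real.exp (-(γ/2) * n)) atTop (𝓝 0) := by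
      have t1 : Tendsto (fun n : ℕ => -(γ/2) * (n:ℝ)) atTop atBot :=
        Tendsto.const_mul_atTop_of_neg (by linarith) tendsto_natCast_atTop_atTop
      have t2 := Real.tendsto_exp_atBot.comp t1
      have t3 := t2.const_mul K
      simpa using t3
    obtain ⟨N₄, hN₄⟩ := eventually_atTop.mp (htend.eventually (gt_mem_nhds hε'))
    refine ⟨max (max 1 N₄) (max (Nat.ceil ((κ/s0)^2)) (Nat.ceil ((2*c/γ)^2))), ?_⟩
    intro n hn ω hω
    have hn1 : 1 ≤ n := le_trans (le_trans (le_max_left 1 N₄) (le_max_left _ _)) hn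
    have hnN₄ : N₄ ≤ n := le_trans (le_trans (le_max_right 1 N₄) (le_max_left _ _)) hn
    have hnc1 : ((κ/s0)^2 : ℝ) ≤ (n:ℝ) := by
      have h := le_trans (le_trans (le_max_left _ _) (le_max_right (max 1 N₄) _)) hn
      exact_mod_cast Nat.ceil_le.mp h
    have hnc2 : ((2*c/γ)^2 : ℝ) ≤ (n:ℝ) := by
      have h := le_trans (le_trans (le_max_right _ _) (le_max_right (max 1 N₄) _)) hn
      exact_mod_cast Nat.ceil_le.mp h
    have hn0 : 0 < n := hn1
    have hnpos : (0:ℝ) < n := by exact_mod_cast hn1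
    have hsn : 0 < Real.sqrt n := Real.sqrt_pos.mpr hnpos
    have hsnsq : Real.sqrt n ^ 2 = (n:ℝ) := Real.sq_sqrt hnpos.le
    have hκsn : κ ≤ s0 * Real.sqrt n := by
      have h1 : κ/s0 ≤ Real.sqrt n := by
        calc κ/s0 = |κ/s0| := (abs_of_pos (by positivity)).symm
        _ = Real.sqrt ((κ/s0)^2) := (Real.sqrt_sq_eq_abs _).symm
        _ ≤ Real.sqrt n := Real.sqrt_le_sqrt hnc1
      calc κ = (κ/s0) * s0 := by field_simp
      _ ≤ Real.sqrt n * s0 := mul_le_mul_of_nonneg_right h1 hs0pos.le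
      _ = s0 * Real.sqrt n := mul_comm _ _
    have hcsn : c ≤ γ/2 * Real.sqrt n := by
      have h1 : 2*c/γ ≤ Real.sqrt n := by
        calc 2*c/γ ≤ |2*c/γ| := le_abs_self _
        _ = Real.sqrt ((2*c/γ)^2) := (Real.sqrt_sq_eq_abs _).symm
        _ ≤ Real.sqrt n := Real.sqrt_le_sqrt hnc2
      rw [div_le_iff₀ hγpos] at h1
      linarith only [h1]
    -- the observation point and the acceptance ball
    set y : EuclideanSpace ℝ (Fin 2) := b₀ + (Real.sqrt n)⁻¹ • Zy n ω with hydef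
    have hyd : ‖y - b₀‖ ≤ M / Real.sqrt n := by
      have h1 : y - b₀ = (Real.sqrt n)⁻¹ • Zy n ω := by rw [hydef]; abel
      rw [h1, norm_smul, Real.norm_eq_abs, abs_of_nonneg (inv_nonneg.mpr hsn.le),
        div_eq_inv_mul]
      exact mul_le_mul_of_nonneg_left hω (inv_nonneg.mpr hsn.le)
    have hobs : ‖y - b₀‖ + ε n ≤ κ / Real.sqrt n := by
      have h1 := hεle n hn1
      have h2 : κ / Real.sqrt n = M / Real.sqrt n + Bb / Real.sqrt n := by
        rw [hκdef, add_div]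
      linarith only [h1, h2, hyd]
    have hball : {t : EuclideanSpace ℝ (Fin 2) | ‖t - y‖ ≤ ε n} =
        Metric.closedBall y (ε n) := by
      ext t; simp [Metric.mem_closedBall, dist_eq_norm]
    simp only [hball]
    set V : ℝ≥0∞ := volume (Metric.closedBall y (ε n)) with hVdef
    have hVne : V ≠ ⊤ := measure_closedBall_lt_top.ne
    have hVpos : 0 < V.toReal :=
      ENNReal.toReal_pos (Metric.measure_closedBall_pos volume y (hε_pos n)).ne' hVne
    clear_value V
    -- norm geometry
    have hnormb : ∀ θ : ℝ, ‖abc_bp θ - b₀‖ = Real.sqrt (2*θ^2 + 2*bbar₀^2) := by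
      intro θ
      apply abc_norm_pair_sub
      · simp [abc_bp, hb₀]
      · simp [abc_bp, hb₀]
    set rn : ℝ := s0 - κ / Real.sqrt n with hrndef
    set Rn : ℝ := R' + κ / Real.sqrt n with hRndef
    have hrn0 : 0 ≤ rn := by
      rw [hrndef, sub_nonneg, div_le_iff₀ hsn]
      linarith only [hκsn]
    have hnum_t : ∀ θ : ℝ, |θ| ≤ δ → ∀ t ∈ Metric.closedBall y (ε n),
        rn ≤ ‖t - abc_bp θ‖ := by
      intro θ hθ t ht
      have h1 : s0 ≤ ‖abc_bp θ - b₀‖ := by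
        rw [hnormb θ, hs0def]
        exact Real.sqrt_le_sqrt (by linarith only [sq_nonneg θ])
      have ht' : ‖t - y‖ ≤ ε n := by
        rw [Metric.mem_closedBall, dist_eq_norm] at ht; exact ht
      have tri := dist_triangle4 (abc_bp θ) t y b₀
      simp only [dist_eq_norm] at tri
      rw [norm_sub_rev (abc_bp θ) t] at tri
      rw [hrndef]
      linarith only [hobs, ht', h1, tri]
    have hden_t : ∀ θ : ℝ, |θ - bbar₀/2| ≤ δ → ∀ t ∈ Metric.closedBall y (ε n),
        ‖t - abc_bp θ‖ ≤ Rn := by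
      intro θ hθ t ht
      have habs := abs_le.mp hθ
      have h1 : ‖abc_bp θ - b₀‖ ≤ R' := by
        rw [hnormb θ, hR'def]
        apply Real.sqrt_le_sqrt
        have hθ2 : θ^2 ≤ (bbar₀/2 + δ₀)^2 :=
          sq_le_sq' (by linarith only [habs.1, hδle, hδ₀_pos, hbbar₀])
            (by linarith only [habs.2, hδle])
        linarith only [hθ2]
      have ht' : ‖t - y‖ ≤ ε n := by
        rw [Metric.mem_closedBall, dist_eq_norm] at ht; exact ht
      have tri := dist_triangle4 t y b₀ (abc_bp θ)
      simp only [dist_eq_norm] at tri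
      rw [norm_sub_rev b₀ (abc_bp θ)] at tri
      rw [hRndef]
      linarith only [hobs, ht', h1, tri]
    -- density bounds
    set Cup : ℝ := (2*π*(vθ 0/2)^2/(n:ℝ))⁻¹ * Real.exp (-((n:ℝ)*rn^2)/(2*A^2)) with hCupdef
    set Clo : ℝ := (2*π*(2*vθ (bbar₀/2))^2/(n:ℝ))⁻¹ *
      Real.exp (-((n:ℝ)*Rn^2)/(2*B₂^2)) with hClodef
    set Cmax : ℝ := (2*π*B₂^2/(n:ℝ))⁻¹ with hCmaxdef
    have hCup_pos : 0 < Cup := by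
      rw [hCupdef]
      exact mul_pos (inv_pos.mpr (div_pos
        (mul_pos (mul_pos two_pos Real.pi_pos) (pow_pos (half_pos hv0) 2)) hnpos))
        (Real.exp_pos _)
    have hClo_pos : 0 < Clo := by
      rw [hClodef]
      exact mul_pos (inv_pos.mpr (div_pos
        (mul_pos (mul_pos two_pos Real.pi_pos) (pow_pos (mul_pos two_pos hv1) 2)) hnpos))
        (Real.exp_pos _)
    have hCmax_nonneg : 0 ≤ Cmax := by
      rw [hCmaxdef]
      exact inv_nonneg.mpr (div_nonneg (by positivity) hnpos.le)
    clear_value rn Rn Cup Clo Cmax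
    have hmu_upper : ∀ θ : ℝ, |θ| ≤ δ →
        (μ n θ (Metric.closedBall y (ε n))).toReal ≤ Cup * V.toReal := by
      intro θ hθ
      obtain ⟨hv_lo, hv_hi⟩ := hnum_v θ hθ
      have hvθ := hvθ_pos θ
      have hdens : ∀ t ∈ Metric.closedBall y (ε n),
          ENNReal.ofReal ((2*π*vθ θ^2/(n:ℝ))⁻¹ *
            Real.exp (-((n:ℝ)*‖t - abc_bp θ‖^2)/(2*vθ θ^2))) ≤ ENNReal.ofReal Cup := by
        intro t ht
        apply ENNReal.ofReal_le_ofReal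
        rw [hCupdef]
        have h1 : (2*π*vθ θ^2/(n:ℝ))⁻¹ ≤ (2*π*(vθ 0/2)^2/(n:ℝ))⁻¹ := by
          apply inv_anti₀ (div_pos
            (mul_pos (mul_pos two_pos Real.pi_pos) (pow_pos (half_pos hv0) 2)) hnpos)
          apply (div_le_div_iff_of_pos_right hnpos).mpr
          have hsq : (vθ 0/2)^2 ≤ vθ θ^2 := pow_le_pow_left₀ (half_pos hv0).le hv_lo 2
          exact mul_le_mul_of_nonneg_left hsq
            (mul_pos two_pos Real.pi_pos).le
        have hr := hnum_t θ hθ t ht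
        have h2 : Real.exp (-((n:ℝ)*‖t - abc_bp θ‖^2)/(2*vθ θ^2))
            ≤ Real.exp (-((n:ℝ)*rn^2)/(2*A^2)) := by
          apply Real.exp_le_exp.mpr
          rw [neg_div, neg_div, neg_le_neg_iff]
          apply div_le_div₀ (by positivity) ?_ (mul_pos two_pos (pow_pos hvθ 2)) ?_
          · exact mul_le_mul_of_nonneg_left (pow_le_pow_left₀ hrn0 hr 2) hnpos.le
          · have hsq2 : vθ θ^2 ≤ A^2 := pow_le_pow_left₀ hvθ.le hv_hi 2
            linarith only [hsq2]
        exact mul_le_mul h1 h2 (Real.exp_pos _).le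
          (inv_nonneg.mpr (div_nonneg (by positivity) hnpos.le))
      have hb1 : μ n θ (Metric.closedBall y (ε n)) ≤ ENNReal.ofReal Cup * V := by
        rw [hμ n θ hn0, hVdef]
        exact abc_wd_le volume _ _ measurableSet_closedBall _ hdens
      have hfin : ENNReal.ofReal Cup * V ≠ ⊤ := ENNReal.mul_ne_top ENNReal.ofReal_ne_top hVne
      have h2 := ENNReal.toReal_mono hfin hb1
      rwa [ENNReal.toReal_mul, ENNReal.toReal_ofReal hCup_pos.le] at h2
    have hdens_meas : ∀ θ : ℝ, Measurable (fun t : EuclideanSpace ℝ (Fin 2) =>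
        ENNReal.ofReal ((2*π*vθ θ^2/(n:ℝ))⁻¹ *
          Real.exp (-((n:ℝ)*‖t - abc_bp θ‖^2)/(2*vθ θ^2)))) := by
      intro θ
      have hc : Continuous (fun t : EuclideanSpace ℝ (Fin 2) =>
          (2*π*vθ θ^2/(n:ℝ))⁻¹ *
            Real.exp (-((n:ℝ)*‖t - abc_bp θ‖^2)/(2*vθ θ^2))) := by
        apply continuous_const.mul
        apply Real.continuous_exp.comp
        apply Continuous.div_const
        exact (continuous_const.mul ((continuous_id.sub continuous_const).norm.pow 2)).neg
      exact ENNReal.measurable_ofReal.comp hc.measurable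
    have hmu_lower : ∀ θ : ℝ, |θ - bbar₀/2| ≤ δ →
        Clo * V.toReal ≤ (μ n θ (Metric.closedBall y (ε n))).toReal ∧
        (μ n θ (Metric.closedBall y (ε n))).toReal ≤ Cmax * V.toReal := by
      intro θ hθ
      obtain ⟨hv_lo, hv_hi⟩ := hden_v θ hθ
      have hvθ := hvθ_pos θ
      have hdensU : ∀ t ∈ Metric.closedBall y (ε n),
          ENNReal.ofReal ((2*π*vθ θ^2/(n:ℝ))⁻¹ *
            Real.exp (-((n:ℝ)*‖t - abc_bp θ‖^2)/(2*vθ θ^2))) ≤ ENNReal.ofReal Cmax := by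
        intro t ht
        apply ENNReal.ofReal_le_ofReal
        rw [hCmaxdef]
        calc (2*π*vθ θ^2/(n:ℝ))⁻¹ *
            Real.exp (-((n:ℝ)*‖t - abc_bp θ‖^2)/(2*vθ θ^2))
            ≤ (2*π*B₂^2/(n:ℝ))⁻¹ * 1 := by
              apply mul_le_mul ?_ ?_ (Real.exp_pos _).le
                (inv_nonneg.mpr (div_nonneg (by positivity) hnpos.le))
              · apply inv_anti₀ (div_pos
                  (mul_pos (mul_pos two_pos Real.pi_pos) (pow_pos hB₂pos 2)) hnpos)
                apply (div_le_div_iff_of_pos_right hnpos).mpr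
                have hsq : B₂^2 ≤ vθ θ^2 := pow_le_pow_left₀ hB₂pos.le hv_lo 2
                exact mul_le_mul_of_nonneg_left hsq (mul_pos two_pos Real.pi_pos).le
              · rw [Real.exp_le_one_iff]
                apply div_nonpos_of_nonpos_of_nonneg
                · simp only [neg_nonpos]
                  positivity
                · positivity
        _ = (2*π*B₂^2/(n:ℝ))⁻¹ := mul_one _
      have hbU : μ n θ (Metric.closedBall y (ε n)) ≤ ENNReal.ofReal Cmax * V := by
        rw [hμ n θ hn0, hVdef]
        exact abc_wd_le volume _ _ measurableSet_closedBall _ hdensU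
      have hfinU : ENNReal.ofReal Cmax * V ≠ ⊤ :=
        ENNReal.mul_ne_top ENNReal.ofReal_ne_top hVne
      have hne : μ n θ (Metric.closedBall y (ε n)) ≠ ⊤ := by
        intro hcon
        rw [hcon] at hbU
        exact hfinU (top_le_iff.mp hbU)
      have hdensL : ∀ t ∈ Metric.closedBall y (ε n),
          ENNReal.ofReal Clo ≤ ENNReal.ofReal ((2*π*vθ θ^2/(n:ℝ))⁻¹ *
            Real.exp (-((n:ℝ)*‖t - abc_bp θ‖^2)/(2*vθ θ^2))) := by
        intro t ht
        apply ENNReal.ofReal_le_ofReal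
        rw [hClodef]
        have hR := hden_t θ hθ t ht
        apply mul_le_mul ?_ ?_ (Real.exp_pos _).le
          (inv_nonneg.mpr (div_nonneg (by positivity) hnpos.le))
        · apply inv_anti₀ (div_pos
            (mul_pos (mul_pos two_pos Real.pi_pos) (pow_pos hvθ 2)) hnpos)
          apply (div_le_div_iff_of_pos_right hnpos).mpr
          have hsq : vθ θ^2 ≤ (2*vθ (bbar₀/2))^2 := pow_le_pow_left₀ hvθ.le hv_hi 2
          exact mul_le_mul_of_nonneg_left hsq (mul_pos two_pos Real.pi_pos).le
        · apply Real.exp_le_exp.mpr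
          rw [neg_div, neg_div, neg_le_neg_iff]
          apply div_le_div₀ ?_ ?_ ?_ ?_
          · positivity
          · exact mul_le_mul_of_nonneg_left (pow_le_pow_left₀ (norm_nonneg _) hR 2) hnpos.le
          · exact mul_pos two_pos (pow_pos hB₂pos 2)
          · have hsq : B₂^2 ≤ vθ θ^2 := pow_le_pow_left₀ hB₂pos.le hv_lo 2
            linarith only [hsq]
      have hbL : ENNReal.ofReal Clo * V ≤ μ n θ (Metric.closedBall y (ε n)) := by
        rw [hμ n θ hn0, hVdef]
        exact abc_wd_ge volume _ (hdens_meas θ) _ measurableSet_closedBall _ hdensL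
      constructor
      · have h2 := ENNReal.toReal_mono hne hbL
        rwa [ENNReal.toReal_mul, ENNReal.toReal_ofReal hClo_pos.le] at h2
      · have h2 := ENNReal.toReal_mono hfinU hbU
        rwa [ENNReal.toReal_mul, ENNReal.toReal_ofReal hCmax_nonneg] at h2
    -- measurability and integrability
    have hmeasf : Measurable (fun θ : ℝ => (μ n θ (Metric.closedBall y (ε n))).toReal) := by
      have heq : (fun θ : ℝ => (μ n θ (Metric.closedBall y (ε n))).toReal)
          = fun θ : ℝ => ((volume.withDensity (fun t => ENNReal.ofReal
            ((2 * π * vθ θ ^ 2 / (n : ℝ))⁻¹ *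
              Real.exp (-((n : ℝ) * ‖t - abc_bp θ‖ ^ 2) / (2 * vθ θ ^ 2)))))
            (Metric.closedBall y (ε n))).toReal := by
        funext θ; rw [hμ n θ hn0]
      rw [heq]
      exact abc_F_meas n vθ hvθ_cont y (ε n)
    have hIntSn : IntegrableOn (fun θ : ℝ => (μ n θ (Metric.closedBall y (ε n))).toReal)
        {θ : ℝ | |θ| ≤ δ} Pr := by
      apply Integrable.mono' (g := fun _ => Cup * V.toReal)
        ((integrableOn_const_iff).mpr (Or.inr (measure_lt_top _ _)))
        hmeasf.aestronglyMeasurable.restrict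
      refine (ae_restrict_iff' hSn_meas).mpr (Filter.Eventually.of_forall fun θ hθ => ?_)
      rw [Real.norm_eq_abs, abs_of_nonneg ENNReal.toReal_nonneg]
      exact hmu_upper θ hθ
    have hIntSD : IntegrableOn (fun θ : ℝ => (μ n θ (Metric.closedBall y (ε n))).toReal)
        {θ : ℝ | |θ - bbar₀/2| ≤ δ} Pr := by
      apply Integrable.mono' (g := fun _ => Cmax * V.toReal)
        ((integrableOn_const_iff).mpr (Or.inr (measure_lt_top _ _)))
        hmeasf.aestronglyMeasurable.restrict
      refine (ae_restrict_iff' hSD_meas).mpr (Filter.Eventually.of_forall fun θ hθ => ?_)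
      rw [Real.norm_eq_abs, abs_of_nonneg ENNReal.toReal_nonneg]
      exact (hmu_lower θ hθ).2
    -- integral bounds
    have hNum_nonneg : 0 ≤ ∫ θ in {θ : ℝ | |θ| ≤ δ},
        (μ n θ (Metric.closedBall y (ε n))).toReal ∂Pr :=
      setIntegral_nonneg hSn_meas fun θ _ => ENNReal.toReal_nonneg
    have hNum_le : (∫ θ in {θ : ℝ | |θ| ≤ δ},
        (μ n θ (Metric.closedBall y (ε n))).toReal ∂Pr) ≤ Cup * V.toReal := by
      calc (∫ θ in {θ : ℝ | |θ| ≤ δ}, (μ n θ (Metric.closedBall y (ε n))).toReal ∂Pr)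
          ≤ ∫ _θ in {θ : ℝ | |θ| ≤ δ}, (Cup * V.toReal) ∂Pr :=
            setIntegral_mono_on hIntSn
              ((integrableOn_const_iff).mpr (Or.inr (measure_lt_top _ _))) hSn_meas
              (fun θ hθ => hmu_upper θ hθ)
      _ = (Pr {θ : ℝ | |θ| ≤ δ}).toReal • (Cup * V.toReal) := setIntegral_const _
      _ ≤ 1 * (Cup * V.toReal) := by
          rw [smul_eq_mul]
          apply mul_le_mul_of_nonneg_right ?_ (mul_nonneg hCup_pos.le ENNReal.toReal_nonneg)
          calc (Pr {θ : ℝ | |θ| ≤ δ}).toReal ≤ (1:ℝ≥0∞).toReal :=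
              ENNReal.toReal_mono (by simp) prob_le_one
          _ = 1 := by simp
      _ = Cup * V.toReal := one_mul _
    have hDen_ge : Clo * V.toReal * p ≤ ∫ θ in {θ : ℝ | |θ - bbar₀/2| ≤ δ},
        (μ n θ (Metric.closedBall y (ε n))).toReal ∂Pr := by
      calc Clo * V.toReal * p
          = (Pr {θ : ℝ | |θ - bbar₀/2| ≤ δ}).toReal • (Clo * V.toReal) := by
            rw [smul_eq_mul, ← hpdef]; ring
      _ = ∫ _θ in {θ : ℝ | |θ - bbar₀/2| ≤ δ}, (Clo * V.toReal) ∂Pr :=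
            (setIntegral_const _).symm
      _ ≤ ∫ θ in {θ : ℝ | |θ - bbar₀/2| ≤ δ},
            (μ n θ (Metric.closedBall y (ε n))).toReal ∂Pr :=
            setIntegral_mono_on ((integrableOn_const_iff).mpr (Or.inr (measure_lt_top _ _)))
              hIntSD hSD_meas (fun θ hθ => (hmu_lower θ hθ).1)
    have hDen_pos : 0 < ∫ θ in {θ : ℝ | |θ - bbar₀/2| ≤ δ},
        (μ n θ (Metric.closedBall y (ε n))).toReal ∂Pr :=
      lt_of_lt_of_le (mul_pos (mul_pos hClo_pos hVpos) hp) hDen_ge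
    -- the ratio bound
    have hratio : (∫ θ in {θ : ℝ | |θ| ≤ δ},
          (μ n θ (Metric.closedBall y (ε n))).toReal ∂Pr) /
        (∫ θ in {θ : ℝ | |θ - bbar₀/2| ≤ δ},
          (μ n θ (Metric.closedBall y (ε n))).toReal ∂Pr)
        ≤ K * Real.exp (-(γ/2) * n) := by
      have h1 := div_le_div₀ (mul_nonneg hCup_pos.le ENNReal.toReal_nonneg) hNum_le
        (mul_pos (mul_pos hClo_pos hVpos) hp) hDen_ge
      have h2 : (Cup * V.toReal) / (Clo * V.toReal * p)
          = (16 * vθ (bbar₀/2)^2 / vθ 0^2) / p *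
            Real.exp (-((n:ℝ)*rn^2)/(2*A^2) - (-((n:ℝ)*Rn^2)/(2*B₂^2))) := by
        rw [hCupdef, hClodef, Real.exp_sub]
        have hVne0 : V.toReal ≠ 0 := hVpos.ne'
        have hπ : (0:ℝ) < π := Real.pi_pos
        field_simp
        ring
      have h3 : -((n:ℝ)*rn^2)/(2*A^2) - (-((n:ℝ)*Rn^2)/(2*B₂^2))
          ≤ -γ*(n:ℝ) + c*Real.sqrt n + c₃ := by
        have hlem := abc_exp_arg_le (Real.sqrt n) s0 R' κ A B₂ γ hsn hApos hB₂pos hgap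
        rw [← hrndef, ← hRndef] at hlem
        calc -((n:ℝ)*rn^2)/(2*A^2) - (-((n:ℝ)*Rn^2)/(2*B₂^2))
            = -(Real.sqrt n^2*rn^2)/(2*A^2) + (Real.sqrt n^2*Rn^2)/(2*B₂^2) := by
              rw [hsnsq]; ring
        _ ≤ -γ*Real.sqrt n^2 + (κ*(s0/A^2 + R'/B₂^2))*Real.sqrt n + κ^2/(2*B₂^2) := hlem
        _ = -γ*(n:ℝ) + c*Real.sqrt n + c₃ := by rw [hsnsq, ← hcdef, ← hc₃def]
      have h4 : -γ*(n:ℝ) + c*Real.sqrt n ≤ -(γ/2)*(n:ℝ) := by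
        have h5 : c * Real.sqrt n ≤ (γ/2*Real.sqrt n)*Real.sqrt n :=
          mul_le_mul_of_nonneg_right hcsn hsn.le
        have h6 : (γ/2*Real.sqrt n)*Real.sqrt n = γ/2*(n:ℝ) := by
          rw [mul_assoc, ← pow_two, hsnsq]
        linarith only [h5, h6]
      calc (∫ θ in {θ : ℝ | |θ| ≤ δ},
            (μ n θ (Metric.closedBall y (ε n))).toReal ∂Pr) /
          (∫ θ in {θ : ℝ | |θ - bbar₀/2| ≤ δ},
            (μ n θ (Metric.closedBall y (ε n))).toReal ∂Pr)
          ≤ (Cup * V.toReal) / (Clo * V.toReal * p) := h1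
      _ = (16 * vθ (bbar₀/2)^2 / vθ 0^2) / p *
            Real.exp (-((n:ℝ)*rn^2)/(2*A^2) - (-((n:ℝ)*Rn^2)/(2*B₂^2))) := h2
      _ ≤ (16 * vθ (bbar₀/2)^2 / vθ 0^2) / p *
            Real.exp (-γ*(n:ℝ) + c*Real.sqrt n + c₃) := by
            apply mul_le_mul_of_nonneg_left (Real.exp_le_exp.mpr h3)
            exact div_nonneg (by positivity) hp.le
      _ = K * Real.exp (-γ*(n:ℝ) + c*Real.sqrt n) := by
            rw [hKdef, Real.exp_add]; ring
      _ ≤ K * Real.exp (-(γ/2) * (n:ℝ)) :=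
            mul_le_mul_of_nonneg_left (Real.exp_le_exp.mpr (by linarith only [h4])) hK.le
    have hfinal : (∫ θ in {θ : ℝ | |θ| ≤ δ},
          (μ n θ (Metric.closedBall y (ε n))).toReal ∂Pr) /
        (∫ θ in {θ : ℝ | |θ - bbar₀/2| ≤ δ},
          (μ n θ (Metric.closedBall y (ε n))).toReal ∂Pr) < ε' :=
      lt_of_le_of_lt hratio (hN₄ n hnN₄)
    constructor
    · rw [abs_of_nonneg (div_nonneg hNum_nonneg hDen_pos.le)]
      exact hfinal
    · by_cases hInt : Integrable (fun θ : ℝ =>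
          (μ n θ (Metric.closedBall y (ε n))).toReal) Pr
      · have hTot : (∫ θ in {θ : ℝ | |θ - bbar₀/2| ≤ δ},
            (μ n θ (Metric.closedBall y (ε n))).toReal ∂Pr)
            ≤ ∫ θ, (μ n θ (Metric.closedBall y (ε n))).toReal ∂Pr :=
          setIntegral_le_integral hInt
            (Filter.Eventually.of_forall fun θ => ENNReal.toReal_nonneg)
        have h2 := div_le_div_of_nonneg_left hNum_nonneg hDen_pos hTot
        rw [abs_of_nonneg (div_nonneg hNum_nonneg (le_trans hDen_pos.le hTot))]
        exact lt_of_le_of_lt h2 hfinal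
      · rw [integral_undef hInt, div_zero, abs_zero]; exact hε'
  -- from the deterministic estimate to convergence in measure
  have conc : ∀ f : ℕ → Ω → ℝ,
      (∀ M : ℝ, 0 < M → ∀ ε' : ℝ, 0 < ε' → ∃ N : ℕ, ∀ n : ℕ, N ≤ n → ∀ ω : Ω,
        ‖Zy n ω‖ ≤ M → |f n ω| < ε') →
      TendstoInMeasure P₀ f atTop (fun _ => 0) := by
    intro f hf
    rw [tendstoInMeasure_iff_dist]
    intro ε' hε'
    rw [ENNReal.tendsto_atTop_zero]
    intro εE hεE
    have hε₂top : min εE 1 ≠ ⊤ := ne_top_of_le_ne_top ENNReal.one_ne_top (min_le_right _ _)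
    have hε₂pos : (0:ℝ≥0∞) < min εE 1 := lt_min hεE zero_lt_one
    have hr : 0 < (min εE 1).toReal := ENNReal.toReal_pos hε₂pos.ne' hε₂top
    obtain ⟨Mc, hMc⟩ := hZy_tight (min εE 1).toReal hr
    obtain ⟨N₁, hN₁⟩ := eventually_atTop.mp (eventually_lt_of_limsup_lt hMc)
    obtain ⟨N₂, hN₂⟩ := hf (max Mc 1) (lt_of_lt_of_le one_pos (le_max_right _ _)) ε' hε'
    refine ⟨max N₁ N₂, fun n hn => ?_⟩
    have hsub : {ω | ε' ≤ dist (f n ω) 0} ⊆ {ω | Mc < ‖Zy n ω‖} := by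
      intro ω hω
      by_contra hcon
      rw [Set.mem_setOf_eq, not_lt] at hcon
      have h1 : ‖Zy n ω‖ ≤ max Mc 1 := le_trans hcon (le_max_left _ _)
      have h2 := hN₂ n (le_trans (le_max_right N₁ N₂) hn) ω h1
      rw [Set.mem_setOf_eq, Real.dist_eq, sub_zero] at hω
      exact absurd hω (not_le.mpr h2)
    calc P₀ {ω | ε' ≤ dist (f n ω) 0} ≤ P₀ {ω | Mc < ‖Zy n ω‖} := measure_mono hsub
    _ ≤ ENNReal.ofReal (min εE 1).toReal := (hN₁ n (le_trans (le_max_left _ _) hn)).le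
    _ = min εE 1 := ENNReal.ofReal_toReal hε₂top
    _ ≤ εE := min_le_left _ _
  constructor
  · apply conc
    intro M hM ε' hε'
    obtain ⟨N, hN⟩ := main M hM ε' hε'
    exact ⟨N, fun n hn ω hω => (hN n hn ω hω).1⟩
  · apply conc
    intro M hM ε' hε'
    obtain ⟨N, hN⟩ := main M hM ε' hε'
    exact ⟨N, fun n hn ω hω => (hN n hn ω hω).2⟩
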